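/- arXiv:1205.4614 — 5 statements merged into one kernel-verified Lean document; each statement's English description precedes it below -/
import Mathlib

section
/- Let q ∈ C with q^p = 1, p odd, and let f : Z → C satisfy a two-term recursion a(k) f(k-1) = d(k) f(k+1) for all k ∈ Z, where a, d : Z → C are p-periodic and nonvanishing. If the averages differ, i.e. ∏_{k=1}^{p} a(k) ≠ ∏_{k=1}^{p} d(k), and f is p-periodic, then f ≡ 0. -/
/-- q-Wronskian vanishing: a p-periodic solution of the two-term
recursion with p-periodic nonvanishing coefficients whose averages differ must vanish. -/
theorem stmt_1 (p : ℕ) (hp : Odd p) (hp0 : 0 < p) (q : ℂ) (hq : q ^ p = 1)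
    (a d f : ℤ → ℂ)
    (hap : ∀ k : ℤ, a (k + p) = a k) (hdp : ∀ k : ℤ, d (k + p) = d k)
    (ha0 : ∀ k : ℤ, a k ≠ 0) (hd0 : ∀ k : ℤ, d k ≠ 0)
    (hrec : ∀ k : ℤ, a k * f (k - 1) = d k * f (k + 1))
    (hav : ∏ k ∈ Finset.range p, a ((k : ℤ) + 1) ≠ ∏ k ∈ Finset.range p, d ((k : ℤ) + 1))
    (hfp : ∀ k : ℤ, f (k + p) = f k) :
    ∀ k : ℤ, f k = 0 := by
  -- multi-period invariance
  have hfz : ∀ (m : ℤ) (x : ℤ), f (x + m * p) = f x := by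
    intro m
    induction m using Int.induction_on with
    | zero => intro x; simp
    | succ n ih =>
      intro x
      have e : x + ((n:ℤ) + 1) * p = (x + n * p) + p := by ring
      rw [e, hfp, ih]
    | pred n ih =>
      intro x
      have h1 : f (x + (-(n:ℤ) - 1) * p) = f (x + (-(n:ℤ) - 1) * p + p) := (hfp _).symm
      have e : x + (-(n:ℤ) - 1) * p + p = x + (-(n:ℤ)) * p := by ring
      rw [h1, e, ih]
  -- step 1: some zero exists
  have hex : ∃ k0, f k0 = 0 := by
    by_contra h
    push_neg at h
    have hshift : ∀ c : ℤ, ∏ k ∈ Finset.range p, f ((k:ℤ) + c)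
        = ∏ k ∈ Finset.range p, f ((k:ℤ) + (c + 1)) := by
      intro c
      have h1 := Finset.prod_range_succ (fun i : ℕ => f ((i:ℤ) + c)) p
      have h2 := Finset.prod_range_succ' (fun i : ℕ => f ((i:ℤ) + c)) p
      have e1 : ((p:ℤ) + c) = c + p := by ring
      have e2 : ((0:ℕ):ℤ) + c = c := by simp
      rw [h2, e2] at h1
      rw [e1, hfp] at h1
      have h1' : (∏ i ∈ Finset.range p, f ((i:ℤ) + (c+1))) * f c
          = (∏ i ∈ Finset.range p, f ((i:ℤ) + c)) * f c := by
        rw [← h1]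
        congr 1
        apply Finset.prod_congr rfl
        intro i _
        congr 1
        push_cast
        ring
      exact (mul_right_cancel₀ (h c) h1').symm
    have hprod : (∏ k ∈ Finset.range p, a ((k:ℤ)+1)) * ∏ k ∈ Finset.range p, f ((k:ℤ)+0)
        = (∏ k ∈ Finset.range p, d ((k:ℤ)+1)) * ∏ k ∈ Finset.range p, f ((k:ℤ)+2) := by
      rw [← Finset.prod_mul_distrib, ← Finset.prod_mul_distrib]
      apply Finset.prod_congr rfl
      intro k _
      have hr := hrec ((k:ℤ)+1)
      have e1 : (k:ℤ)+1-1 = k+0 := by ring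
      have e2 : (k:ℤ)+1+1 = k+2 := by ring
      rw [e1, e2] at hr
      exact hr
    have h02 : ∏ k ∈ Finset.range p, f ((k:ℤ)+0) = ∏ k ∈ Finset.range p, f ((k:ℤ)+2) := by
      have s0 := hshift 0
      have s1 := hshift 1
      norm_num at s0 s1
      simpa using s0.trans s1
    rw [h02] at hprod
    have hne : ∏ k ∈ Finset.range p, f ((k:ℤ)+2) ≠ 0 :=
      Finset.prod_ne_zero_iff.mpr (fun k _ => h _)
    exact hav (mul_right_cancel₀ hne hprod)
  obtain ⟨k0, hk0⟩ := hex
  -- step 2: propagation by steps of 2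
  have hstep : ∀ n : ℕ, f (k0 + 2 * n) = 0 := by
    intro n
    induction n with
    | zero => simpa using hk0
    | succ n ih =>
      have hr := hrec (k0 + 2 * n + 1)
      have e1 : k0 + 2 * (n:ℤ) + 1 - 1 = k0 + 2 * n := by ring
      have e2 : k0 + 2 * (n:ℤ) + 1 + 1 = k0 + 2 * ((n:ℤ) + 1) := by ring
      rw [e1, e2, ih, mul_zero] at hr
      have := (mul_eq_zero.mp hr.symm).resolve_left (hd0 _)
      push_cast
      exact this
  intro k
  obtain ⟨s, hs⟩ := hp
  have hpne : (p:ℤ) ≠ 0 := by exact_mod_cast hp0.ne'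
  set t : ℤ := (k - k0) % p with htdef
  have ht0 : 0 ≤ t := Int.emod_nonneg _ hpne
  set n : ℕ := t.toNat * (s + 1) with hndef
  have htn : (t.toNat : ℤ) = t := Int.toNat_of_nonneg ht0
  set m : ℤ := (k - k0) / p - t with hmdef
  have hps : (p:ℤ) = 2 * (s:ℤ) + 1 := by exact_mod_cast hs
  have hnz : (n:ℤ) = t * ((s:ℤ) + 1) := by rw [hndef]; push_cast [htn]; ring
  have hdm := Int.emod_add_mul_ediv (k - k0) (p:ℤ)
  have hk : k = k0 + 2 * (n:ℤ) + m * p := by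
    rw [hnz, hmdef]
    linear_combination t * hps - hdm
  calc f k = f (k0 + 2 * (n:ℤ) + m * p) := by rw [← hk]
    _ = f (k0 + 2 * (n:ℤ)) := hfz m _
    _ = 0 := hstep n
end

section
/- Let p be odd, q a primitive p-th root of unity, and let a, d : Z/pZ → C be nonvanishing with ∏_j a(j) ≠ ∏_j d(j). Suppose Q, Q̄ : Z/pZ → C both satisfy t(j)X(j) = a(j)X(j−1) + d(j)X(j+1) for the same t and are both nonzero. Then Q̄ is a scalar multiple of Q. -/
/-- uniqueness up to scalar of nonzero solutions of the cyclic
Baxter equation when the averages of the coefficients differ. -/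
theorem stmt_10 (p : ℕ) [NeZero p] (hp : Odd p) (q : ℂ) (hq : IsPrimitiveRoot q p)
    (t a d : ZMod p → ℂ) (ha0 : ∀ j, a j ≠ 0) (hd0 : ∀ j, d j ≠ 0)
    (hav : ∏ j : ZMod p, a j ≠ ∏ j : ZMod p, d j)
    (Q Qb : ZMod p → ℂ) (hQ : Q ≠ 0) (hQb : Qb ≠ 0)
    (hQrec : ∀ j, t j * Q j = a j * Q (j - 1) + d j * Q (j + 1))
    (hQbrec : ∀ j, t j * Qb j = a j * Qb (j - 1) + d j * Qb (j + 1)) :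
    ∃ c : ℂ, ∀ j, Qb j = c * Q j := by
  -- the q-Wronskian
  set W : ZMod p → ℂ := fun j => Q j * Qb (j - 1) - Qb j * Q (j - 1) with hWdef
  have hW : ∀ j, a j * W j = d j * W (j + 1) := by
    intro j
    have h1 := hQrec j
    have h2 := hQbrec j
    simp only [hWdef, add_sub_cancel_right]
    linear_combination Qb j * h1 - Q j * h2
  -- the product of the Wronskian vanishes
  have hprod : ∏ j : ZMod p, W j = 0 := by
    have h1 : (∏ j : ZMod p, a j) * ∏ j : ZMod p, W j
        = (∏ j : ZMod p, d j) * ∏ j : ZMod p, W j := by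
      have h2 : ∏ j : ZMod p, (a j * W j) = ∏ j : ZMod p, (d j * W (j + 1)) := by
        exact Finset.prod_congr rfl fun j _ => hW j
      have h3 : ∏ j : ZMod p, W (j + 1) = ∏ j : ZMod p, W j :=
        Fintype.prod_equiv (Equiv.addRight 1) _ _ fun j => rfl
      rw [Finset.prod_mul_distrib, Finset.prod_mul_distrib, h3] at h2
      exact h2
    by_contra h
    exact hav (mul_right_cancel₀ h h1)
  -- so some value vanishes, and then all values vanish
  obtain ⟨j0, -, hj0⟩ := Finset.prod_eq_zero_iff.mp hprod
  have hWall : ∀ j, W j = 0 := by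
    have key : ∀ n : ℕ, W (j0 + n) = 0 := by
      intro n
      induction n with
      | zero => simpa using hj0
      | succ n ih =>
        have := hW (j0 + n)
        rw [ih, mul_zero] at this
        have h4 : W (j0 + n + 1) = 0 := by
          rcases mul_eq_zero.mp this.symm with h | h
          · exact absurd h (hd0 _)
          · exact h
        rw [show ((j0 : ZMod p) + (n + 1 : ℕ)) = j0 + n + 1 by push_cast; ring]
        exact h4
    intro j
    obtain ⟨n, hn⟩ := ZMod.natCast_zmod_surjective (n := p) (j - j0)
    have : j = j0 + n := by rw [hn]; ring
    rw [this]; exact key n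
  -- choose a point where Q is nonzero
  have hex : ∃ j1, Q j1 ≠ 0 := by
    by_contra h
    push_neg at h
    exact hQ (funext fun j => h j)
  obtain ⟨j1, hj1⟩ := hex
  refine ⟨Qb j1 / Q j1, ?_⟩
  set c : ℂ := Qb j1 / Q j1 with hc
  set R : ZMod p → ℂ := fun j => Qb j - c * Q j with hRdef
  have hRrec : ∀ j, t j * R j = a j * R (j - 1) + d j * R (j + 1) := by
    intro j
    simp only [hRdef]
    linear_combination hQbrec j - c * hQrec j
  have hRW : ∀ j, Q j * R (j - 1) - R j * Q (j - 1) = 0 := by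
    intro j
    have := hWall j
    simp only [hWdef] at this
    simp only [hRdef]
    linear_combination this
  have hR1 : R j1 = 0 := by
    simp only [hRdef, hc]
    field_simp
    ring
  have hR2 : R (j1 + 1) = 0 := by
    have := hRW (j1 + 1)
    rw [add_sub_cancel_right, hR1, mul_zero, zero_sub, neg_eq_zero] at this
    rcases mul_eq_zero.mp this with h | h
    · exact h
    · exact absurd h hj1
  have hRall : ∀ j, R j = 0 := by
    have key : ∀ n : ℕ, R (j1 + n) = 0 ∧ R (j1 + n + 1) = 0 := by
      intro n
      induction n with
      | zero => simpa using ⟨hR1, hR2⟩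
      | succ n ih =>
        obtain ⟨ih1, ih2⟩ := ih
        have hrec := hRrec (j1 + n + 1)
        rw [add_sub_cancel_right, ih1, ih2, mul_zero, mul_zero, zero_add] at hrec
        have h5 : R (j1 + n + 1 + 1) = 0 := by
          rcases mul_eq_zero.mp hrec.symm with h | h
          · exact absurd h (hd0 _)
          · exact h
        constructor
        · rw [show ((j1 : ZMod p) + (n + 1 : ℕ)) = j1 + n + 1 by push_cast; ring]
          exact ih2
        · rw [show ((j1 : ZMod p) + (n + 1 : ℕ) + 1) = j1 + n + 1 + 1 by push_cast; ring]
          exact h5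
    intro j
    obtain ⟨n, hn⟩ := ZMod.natCast_zmod_surjective (n := p) (j - j1)
    have : j = j1 + n := by rw [hn]; ring
    rw [this]; exact (key n).1
  intro j
  have := hRall j
  simp only [hRdef] at this
  linear_combination this
end

section
/- Let p = 2l+1, q a primitive p-th root of unity, and let the cyclic tridiagonal p×p matrix D(λ) (diagonal t(q^{j-1}λ), subdiagonal −a(q^{j-1}λ), superdiagonal −d(q^{j-1}λ), corners −a(λ), −d(q^{2l}λ)) have determinant identically zero and rank p−1 for every λ ≠ 0. Then the cofactors satisfy C_{1,1}(qλ)/C_{1,p}(qλ) = C_{1,2}(λ)/C_{1,1}(λ) wherever the denominators are nonzero, and the Baxter relation t(λ) C_{1,1}(λ) = a(λ) C_{1,p}(λ) + d(λ) C_{1,2}(λ) holds for all λ. -/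
/-- cofactor identities (4.17)–(4.20) for the cyclic Baxter matrix
with identically vanishing determinant and corank one. -/
theorem stmt_14 (l : ℕ) (hl : 1 ≤ l) (q : ℂ) (hq : IsPrimitiveRoot q (2*l+1))
    (t a d : ℂ → ℂ)
    (D : ℂ → Matrix (Fin (2*l+1)) (Fin (2*l+1)) ℂ)
    (hD : ∀ x : ℂ, D x = Matrix.of fun i j : Fin (2*l+1) =>
      if j = i then t (q ^ (i : ℕ) * x)
      else if j + 1 = i then -a (q ^ (i : ℕ) * x)
      else if j = i + 1 then -d (q ^ (i : ℕ) * x) else 0)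
    (hdet : ∀ x : ℂ, x ≠ 0 → (D x).det = 0)
    (hrank : ∀ x : ℂ, x ≠ 0 → (D x).rank = 2*l)
    (C : Fin (2*l+1) → Fin (2*l+1) → ℂ → ℂ)
    (hC : ∀ i j x, C i j x =
      (-1 : ℂ) ^ ((i : ℕ) + (j : ℕ)) * ((D x).submatrix i.succAbove j.succAbove).det) :
    (∀ x : ℂ, x ≠ 0 → C 0 (Fin.last (2*l)) (q * x) ≠ 0 → C 0 0 x ≠ 0 →
      C 0 0 (q * x) / C 0 (Fin.last (2*l)) (q * x) = C 0 1 x / C 0 0 x) ∧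
    (∀ x : ℂ, x ≠ 0 →
      t x * C 0 0 x = a x * C 0 (Fin.last (2*l)) x + d x * C 0 1 x) := by
  obtain ⟨m, rfl⟩ : ∃ m, l = m + 1 := ⟨l - 1, by omega⟩
  clear hl
  have hq1 : q ^ (2*(m+1)+1) = 1 := hq.pow_eq_one
  have hqmod : ∀ n : ℕ, q ^ (n % (2*(m+1)+1)) = q ^ n := by
    intro n
    conv_rhs => rw [← Nat.div_add_mod n (2*(m+1)+1)]
    rw [pow_add, pow_mul, hq1, one_pow, one_mul]
  have hval1 : ((1 : Fin (2*(m+1)+1)) : ℕ) = 1 := by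
    rw [Fin.val_one', Nat.mod_eq_of_lt (by omega)]
  have hsucc : ∀ i : Fin (2*(m+1)+1), ((i + 1 : Fin (2*(m+1)+1)) : ℕ) = ((i : ℕ) + 1) % (2*(m+1)+1) := by
    intro i
    rw [Fin.val_add, hval1]
  -- shift property
  have hshift : ∀ (x : ℂ) (i j : Fin (2*(m+1)+1)), D (q * x) i j = D x (i + 1) (j + 1) := by
    intro x i j
    have hv : q ^ ((i + 1 : Fin (2*(m+1)+1)) : ℕ) * x = q ^ (i : ℕ) * (q * x) := by
      rw [hsucc, hqmod, pow_succ]; ring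
    rw [hD, hD]
    simp only [Matrix.of_apply, add_left_inj, hv]
  -- entries of row 0
  have hlast1 : (Fin.last (2*(m+1)) + 1 : Fin (2*(m+1)+1)) = 0 := by
    apply Fin.ext
    rw [hsucc]
    simp [Fin.val_last, Nat.mod_self]
  have hlastiff : ∀ j : Fin (2*(m+1)+1), j + 1 = 0 ↔ j = Fin.last (2*(m+1)) := by
    intro j
    constructor
    · intro h
      have h2 := congrArg Fin.val h
      rw [hsucc] at h2
      have := j.isLt
      apply Fin.ext
      simp only [Fin.val_last]
      rcases Nat.lt_or_ge ((j:ℕ)+1) (2*(m+1)+1) with h3 | h3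
      · rw [Nat.mod_eq_of_lt h3] at h2; simp at h2
      · omega
    · intro h; rw [h, hlast1]
  have h0ne1 : (0 : Fin (2*(m+1)+1)) ≠ 1 := by
    intro h; have := congrArg Fin.val h; rw [hval1] at this; simp at this
  have h0nelast : (0 : Fin (2*(m+1)+1)) ≠ Fin.last (2*(m+1)) := by
    intro h; have := congrArg Fin.val h; simp [Fin.val_last] at this
  have h1nelast : (1 : Fin (2*(m+1)+1)) ≠ Fin.last (2*(m+1)) := by
    intro h; have := congrArg Fin.val h; rw [hval1] at this
    simp [Fin.val_last] at this; omega
  have hrow0 : ∀ x : ℂ, ∀ j : Fin (2*(m+1)+1), D x 0 j =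
      if j = 0 then t x else if j = 1 then -d x else if j = Fin.last (2*(m+1)) then -a x else 0 := by
    intro x j
    rw [hD]
    simp only [Matrix.of_apply, Fin.val_zero, pow_zero, one_mul, zero_add, hlastiff]
    by_cases h1 : j = 0
    · simp [h1, h0ne1.symm, h0nelast.symm]
    · by_cases h2 : j = 1
      · simp [h1, h2, h1nelast]
      · by_cases h3 : j = Fin.last (2*(m+1))
        · simp [h1, h2, h3, h1nelast.symm]
        · simp [h1, h2, h3]
  -- cofactor expansion along row 0
  have hCzero : ∀ (j : Fin (2*(m+1)+1)) (x : ℂ), C 0 j x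
      = (-1:ℂ)^(j:ℕ) * ((D x).submatrix Fin.succ j.succAbove).det := by
    intro j x
    rw [hC]
    simp [Fin.succAbove_zero]
  have hexp : ∀ x : ℂ, (D x).det
      = t x * C 0 0 x - a x * C 0 (Fin.last (2*(m+1))) x - d x * C 0 1 x := by
    intro x
    have e1 : (D x).det = ∑ j : Fin (2*(m+1)+1), D x 0 j * C 0 j x := by
      rw [Matrix.det_succ_row_zero]
      refine Finset.sum_congr rfl fun j _ => ?_
      rw [hCzero]; ring
    have hzero : ∀ j ∈ (Finset.univ : Finset (Fin (2*(m+1)+1))),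
        j ∉ ({0, 1, Fin.last (2*(m+1))} : Finset (Fin (2*(m+1)+1))) → D x 0 j * C 0 j x = 0 := by
      intro j _ hj
      simp only [Finset.mem_insert, Finset.mem_singleton] at hj
      push_neg at hj
      rw [hrow0]
      simp [hj.1, hj.2.1, hj.2.2]
    rw [e1, ← Finset.sum_subset (Finset.subset_univ _) hzero]
    rw [Finset.sum_insert (by simp [h0ne1, h0nelast]),
      Finset.sum_insert (by simp [h1nelast]), Finset.sum_singleton]
    rw [hrow0, hrow0, hrow0]
    simp only [if_pos rfl, h0ne1.symm, Ne.symm h1nelast, h0nelast.symm, if_neg, ite_true,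
      ite_false, if_false]
    simp [h0ne1.symm, Ne.symm h1nelast, h0nelast.symm]
    ring
  haveI : NeZero (2*(m+1)) := ⟨by omega⟩
  have hval1' : ((1 : Fin (2*(m+1))) : ℕ) = 1 := by
    rw [Fin.val_one', Nat.mod_eq_of_lt (by omega)]
  have hσ : ∀ i : Fin (2*(m+1)), (finRotate (2*(m+1))) i = i + 1 := fun i =>
    finRotate_succ_apply (n := 2*m+1) i
  have hsgn : Equiv.Perm.sign (finRotate (2*(m+1))) = -1 := by
    have h := sign_finRotate (2*(m+1))
    rw [Odd.neg_one_pow ⟨m, by omega⟩] at h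
    exact h
  have hcastsucc1 : ∀ b : Fin (2*(m+1)), (Fin.castSucc b + 1 : Fin (2*(m+1)+1)) = Fin.succ b := by
    intro b
    apply Fin.ext
    rw [hsucc]
    have := b.isLt
    simp only [Fin.coe_castSucc, Fin.val_succ]
    exact Nat.mod_eq_of_lt (by omega)
  have hkey : ∀ b : Fin (2*(m+1)), (1 : Fin (2*(m+1)+1)).succAbove (b + 1) = Fin.succ b + 1 := by
    intro b
    have hb := b.isLt
    have hvb1 : ((b + 1 : Fin (2*(m+1))) : ℕ) = ((b:ℕ) + 1) % (2*(m+1)) := by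
      rw [Fin.val_add, hval1']
    apply Fin.ext
    rw [Fin.succAbove]
    have hrhs : ((Fin.succ b + 1 : Fin (2*(m+1)+1)) : ℕ) = ((b:ℕ) + 2) % (2*(m+1)+1) := by
      rw [hsucc, Fin.val_succ]
    split_ifs with h
    · rw [Fin.lt_def] at h
      simp only [Fin.coe_castSucc, hvb1, hval1] at h
      rw [hrhs]
      simp only [Fin.coe_castSucc, hvb1]
      rcases Nat.lt_or_ge ((b:ℕ)+1) (2*(m+1)) with h3 | h3
      · rw [Nat.mod_eq_of_lt h3] at h; omega
      · have hb2 : (b:ℕ) + 1 = 2*(m+1) := by omega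
        rw [hb2, Nat.mod_self]
        have hb3 : (b:ℕ) + 2 = 2*(m+1)+1 := by omega
        rw [hb3, Nat.mod_self]
    · rw [Fin.lt_def] at h
      simp only [Fin.coe_castSucc, hvb1, hval1] at h
      rw [hrhs]
      simp only [Fin.val_succ, hvb1]
      rcases Nat.lt_or_ge ((b:ℕ)+1) (2*(m+1)) with h3 | h3
      · rw [Nat.mod_eq_of_lt h3, Nat.mod_eq_of_lt (by omega)]
      · have hb2 : (b:ℕ) + 1 = 2*(m+1) := by omega
        rw [hb2, Nat.mod_self] at h
        omega
  -- shift identities for cofactors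
  have hB1 : ∀ x : ℂ, C 0 0 (q * x) = C 1 1 x := by
    intro x
    rw [hC, hC]
    have hM : (D (q*x)).submatrix (Fin.succAbove 0) (Fin.succAbove 0)
        = ((D x).submatrix (Fin.succAbove 1) (Fin.succAbove 1)).submatrix
            (finRotate (2*(m+1))) (finRotate (2*(m+1))) := by
      ext a b
      simp only [Matrix.submatrix_apply, Fin.succAbove_zero]
      rw [hshift, hσ, hσ, hkey, hkey]
    rw [hM, Matrix.det_submatrix_equiv_self]
    simp [hval1]
  have hB2 : ∀ x : ℂ, C 0 (Fin.last (2*(m+1))) (q * x) = C 1 0 x := by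
    intro x
    rw [hC, hC]
    have hM : (D (q*x)).submatrix (Fin.succAbove 0) (Fin.succAbove (Fin.last (2*(m+1))))
        = ((D x).submatrix (Fin.succAbove 1) (Fin.succAbove 0)).submatrix
            (finRotate (2*(m+1))) id := by
      ext a b
      simp only [Matrix.submatrix_apply, Fin.succAbove_zero, Fin.succAbove_last, id_eq]
      rw [hshift, hσ, hkey, hcastsucc1]
    rw [hM, Matrix.det_permute, hsgn]
    simp only [Fin.val_zero, Fin.val_last, hval1, zero_add, add_zero, pow_one]
    rw [Even.neg_one_pow ⟨m+1, by ring⟩]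
    push_cast
    ring
  -- rank-one property of the adjugate
  have hrk : ∀ x : ℂ, x ≠ 0 → C 0 0 x * C 1 1 x = C 0 1 x * C 1 0 x := by
    intro x hx
    have hdet0 : (D x).det = 0 := hdet x hx
    have hmul : D x * (D x).adjugate = 0 := by
      rw [Matrix.mul_adjugate, hdet0, zero_smul]
    have hker : Module.finrank ℂ (LinearMap.ker (Matrix.mulVecLin (D x))) = 1 := by
      have h1 := LinearMap.finrank_range_add_finrank_ker (Matrix.mulVecLin (D x))
      have h2 : Module.finrank ℂ (LinearMap.range (Matrix.mulVecLin (D x))) = 2*(m+1) :=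
        hrank x hx
      rw [h2, Module.finrank_fintype_fun_eq_card] at h1
      simp only [Fintype.card_fin] at h1
      omega
    obtain ⟨v, hv0, hvspan⟩ := finrank_eq_one_iff'.mp hker
    have hcol : ∀ k : Fin (2*(m+1)+1), ∃ c : ℂ, ∀ i,
        (D x).adjugate i k = c * (v : Fin (2*(m+1)+1) → ℂ) i := by
      intro k
      have hmem : (fun i => (D x).adjugate i k) ∈ LinearMap.ker (Matrix.mulVecLin (D x)) := by
        rw [LinearMap.mem_ker, Matrix.mulVecLin_apply]
        funext i
        have h3 : (D x * (D x).adjugate) i k = 0 := by rw [hmul]; rfl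
        rw [Matrix.mul_apply] at h3
        simpa [Matrix.mulVec, dotProduct] using h3
      obtain ⟨c, hc⟩ := hvspan ⟨_, hmem⟩
      refine ⟨c, fun i => ?_⟩
      have h4 := congrArg (fun w : LinearMap.ker (Matrix.mulVecLin (D x)) =>
        (w : Fin (2*(m+1)+1) → ℂ) i) hc
      simpa using h4.symm
    obtain ⟨c0, hc0⟩ := hcol 0
    obtain ⟨c1, hc1⟩ := hcol 1
    have hCadj : ∀ i j : Fin (2*(m+1)+1), C i j x = (D x).adjugate j i := by
      intro i j
      rw [hC, Matrix.adjugate_fin_succ_eq_det_submatrix]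
    rw [hCadj, hCadj, hCadj, hCadj, hc0, hc1, hc1, hc0]
    ring
  refine ⟨?_, ?_⟩
  · intro x hx hden1 hden2
    rw [div_eq_div_iff hden1 hden2, hB1, hB2]
    linear_combination hrk x hx
  · intro x hx
    have h := hdet x hx
    rw [hexp x] at h
    linear_combination h
end

section
/- Let p = 2l+1, q a primitive p-th root of unity, and let D(λ) be the cyclic tridiagonal matrix built from Laurent polynomials t, a, d as above. Then the cofactors satisfy the shift identities C_{h+i,k+i}(λ) = C_{h,k}(λ q^i) for all i, h, k ∈ {1,...,p} (indices mod p). -/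
/-- shift identities `C_{h+i,k+i}(λ) = C_{h,k}(λ q^i)` for the
cofactors of the cyclic Baxter matrix (indices mod p). -/
theorem stmt_15 (l : ℕ) (q : ℂ) (hq : IsPrimitiveRoot q (2*l+1))
    (t a d : ℂ → ℂ)
    (D : ℂ → Matrix (Fin (2*l+1)) (Fin (2*l+1)) ℂ)
    (hD : ∀ x : ℂ, D x = Matrix.of fun i j : Fin (2*l+1) =>
      if j = i then t (q ^ (i : ℕ) * x)
      else if j + 1 = i then -a (q ^ (i : ℕ) * x)
      else if j = i + 1 then -d (q ^ (i : ℕ) * x) else 0)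
    (C : Fin (2*l+1) → Fin (2*l+1) → ℂ → ℂ)
    (hC : ∀ i j x, C i j x =
      (-1 : ℂ) ^ ((i : ℕ) + (j : ℕ)) * ((D x).submatrix i.succAbove j.succAbove).det) :
    ∀ (i h k : Fin (2*l+1)) (x : ℂ), C (h + i) (k + i) x = C h k (q ^ (i : ℕ) * x) := by
  intro i h k x
  have hp : q ^ (2*l+1) = 1 := hq.pow_eq_one
  -- the shifted matrix is a cyclic submatrix of the original one
  have key : D (q ^ (i:ℕ) * x) = (D x).submatrix (Equiv.addRight i) (Equiv.addRight i) := by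
    rw [hD, hD]
    ext j m
    have hq' : q ^ (((j + i : Fin (2*l+1)) : ℕ)) * x = q ^ (j:ℕ) * (q ^ (i:ℕ) * x) := by
      rw [Fin.val_add, ← pow_eq_pow_mod _ hp, pow_add]; ring
    have e1 : m + i = j + i ↔ m = j := add_left_injective i |>.eq_iff
    have e2 : m + i + 1 = j + i ↔ m + 1 = j := by
      rw [add_right_comm]; exact add_left_injective i |>.eq_iff
    have e3 : m + i = j + i + 1 ↔ m = j + 1 := by
      rw [add_right_comm j i 1]; exact add_left_injective i |>.eq_iff
    simp only [Matrix.submatrix_apply, Matrix.of_apply, Equiv.coe_addRight, hq', e1, e2, e3]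
  -- cofactors are adjugate entries
  have hadj : ∀ (A : Matrix (Fin (2*l+1)) (Fin (2*l+1)) ℂ) (u v : Fin (2*l+1)),
      (-1:ℂ) ^ ((u:ℕ)+(v:ℕ)) * (A.submatrix u.succAbove v.succAbove).det = A.adjugate v u := by
    intro A u v
    rw [Matrix.adjugate_fin_succ_eq_det_submatrix (n := 2*l)]
  rw [hC, hC, key, hadj, hadj,
    Matrix.adjugate_submatrix_equiv_self (Equiv.addRight i) (D x)]
  rfl
end

section
/- Conversely, let p be odd, q a primitive p-th root of unity, a, d Laurent polynomials, and (λ_1,...,λ_m) a tuple of nonzero complex numbers, pairwise distinct, satisfying the Bethe equations a(λ_c)/d(λ_c) = −q^{2a} ∏_{h=1}^m (qλ_c − λ_h)/(λ_c/q − λ_h) for all c, with d(λ_c) ≠ 0 and λ_c/q ∉ {λ_1,...,λ_m}. Define Q(λ) = λ^a ∏_h (λ_h − λ) and t(λ) = (a(λ)Q(λ/q) + d(λ)Q(λq))/Q(λ). Then t extends to a Laurent polynomial (i.e. Q(λ) divides a(λ)Q(λ/q) + d(λ)Q(λq) in C[λ,λ^{-1}]). -/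
/-- A function `ℂ* → ℂ` given by a Laurent polynomial. -/
def IsLaurentFun (f : ℂ → ℂ) : Prop :=
  ∃ (N : ℕ) (c : ℤ → ℂ), ∀ x : ℂ, x ≠ 0 →
    f x = ∑ j ∈ Finset.Icc (-(N : ℤ)) (N : ℤ), c j * x ^ j

lemma laurent_to_poly {f : ℂ → ℂ} (hf : IsLaurentFun f) :
    ∃ (M : ℕ) (P : Polynomial ℂ), ∀ x : ℂ, x ≠ 0 → f x * x ^ M = P.eval x := by
  obtain ⟨N, c, hc⟩ := hf
  refine ⟨N, ∑ k ∈ Finset.range (2*N+1), Polynomial.C (c ((k : ℤ) - N)) * Polynomial.X ^ k,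
    fun x hx => ?_⟩
  rw [hc x hx, Finset.sum_mul, Polynomial.eval_finset_sum]
  simp only [Polynomial.eval_mul, Polynomial.eval_C, Polynomial.eval_pow, Polynomial.eval_X]
  refine Finset.sum_nbij' (i := fun j => (j + N).toNat) (j := fun k => (k : ℤ) - N)
    ?_ ?_ ?_ ?_ ?_
  · intro j hj
    simp only [Finset.mem_Icc] at hj
    simp only [Finset.mem_range]
    omega
  · intro k hk
    simp only [Finset.mem_range] at hk
    simp only [Finset.mem_Icc]
    omega
  · intro j hj
    simp only [Finset.mem_Icc] at hj
    show (((j + N).toNat : ℤ)) - N = j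
    omega
  · intro k hk
    simp only [Finset.mem_range] at hk
    show (((k : ℤ) - N) + N).toNat = k
    omega
  · intro j hj
    simp only [Finset.mem_Icc] at hj
    have h1 : ((j + N).toNat : ℤ) = j + N := Int.toNat_of_nonneg (by omega)
    have h2 : x ^ ((j + N).toNat) = x ^ ((j : ℤ) + N) := by
      rw [← zpow_natCast, h1]
    rw [h1, h2, zpow_add₀ hx, show ((j:ℤ) + N - N) = j by ring, zpow_natCast]
    ring

lemma poly_to_laurent (K : ℕ) (P : Polynomial ℂ) :
    IsLaurentFun (fun x => P.eval x / x ^ K) := by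
  set D := P.natDegree with hD
  refine ⟨K + D, fun j => if 0 ≤ j + K then P.coeff (j + K).toNat else 0, fun x hx => ?_⟩
  beta_reduce
  have hsub : Finset.Icc (-(K:ℤ)) (K + D : ℕ) ⊆ Finset.Icc (-((K + D : ℕ):ℤ)) ((K + D : ℕ):ℤ) := by
    intro j hj
    simp only [Finset.mem_Icc] at *
    push_cast at *
    omega
  rw [← Finset.sum_subset hsub (by
    intro j hj hj'
    simp only [Finset.mem_Icc] at hj hj'
    have : ¬ (0 ≤ j + K) := by push_cast at hj hj'; omega
    simp [this])]
  have heval : P.eval x = ∑ k ∈ Finset.range (2*K + D + 1), P.coeff k * x ^ k :=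
    Polynomial.eval_eq_sum_range' (by omega : P.natDegree < 2*K + D + 1) x
  rw [div_eq_iff (pow_ne_zero K hx), heval, Finset.sum_mul]
  refine Finset.sum_nbij' (i := fun k => (k : ℤ) - K) (j := fun j => (j + K).toNat)
    ?_ ?_ ?_ ?_ ?_
  · intro k hk
    simp only [Finset.mem_range] at hk
    simp only [Finset.mem_Icc]
    push_cast
    omega
  · intro j hj
    simp only [Finset.mem_Icc] at hj
    simp only [Finset.mem_range]
    push_cast at hj
    omega
  · intro k hk
    show ((((k:ℤ) - K) + K).toNat) = k
    omega
  · intro j hj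
    simp only [Finset.mem_Icc] at hj
    push_cast at hj
    show (((j + K).toNat : ℤ)) - K = j
    omega
  · intro k hk
    simp only [Finset.mem_range] at hk
    beta_reduce
    have hpos : (0:ℤ) ≤ ((k:ℤ) - K) + K := by omega
    have h1 : ((((k:ℤ) - K) + K).toNat) = k := by omega
    rw [if_pos hpos, h1]
    show P.coeff k * x ^ k = P.coeff k * x ^ ((k:ℤ) - K) * x ^ K
    have h2 : x ^ ((k:ℤ) - K) = x ^ k / x ^ K := by
      rw [zpow_sub₀ hx, zpow_natCast, zpow_natCast]
    rw [h2]
    field_simp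

lemma prod_X_sub_C_dvd_of_injective {m : ℕ} (ℓ : Fin m → ℂ) (hinj : Function.Injective ℓ)
    (P : Polynomial ℂ) (hroot : ∀ c, P.eval (ℓ c) = 0) :
    (∏ c, (Polynomial.X - Polynomial.C (ℓ c))) ∣ P := by
  suffices H : ∀ s : Finset (Fin m), ∀ P : Polynomial ℂ, (∀ c ∈ s, P.eval (ℓ c) = 0) →
      (∏ c ∈ s, (Polynomial.X - Polynomial.C (ℓ c))) ∣ P from
    H Finset.univ P (fun c _ => hroot c)
  intro s
  induction s using Finset.induction_on with
  | empty => intro P _; simp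
  | @insert i s hi ih =>
    intro P hP
    have h1 : (Polynomial.X - Polynomial.C (ℓ i)) ∣ P :=
      Polynomial.dvd_iff_isRoot.mpr (hP i (Finset.mem_insert_self i s))
    obtain ⟨R, hR⟩ := h1
    have h2 : ∀ c ∈ s, R.eval (ℓ c) = 0 := by
      intro c hc
      have h3 := hP c (Finset.mem_insert_of_mem hc)
      rw [hR, Polynomial.eval_mul, Polynomial.eval_sub, Polynomial.eval_X,
        Polynomial.eval_C] at h3
      have h4 : ℓ c - ℓ i ≠ 0 := sub_ne_zero.mpr fun h => hi (by
        rwa [hinj h] at hc)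
      exact (mul_eq_zero.mp h3).resolve_left h4
    rw [Finset.prod_insert hi, hR]
    exact mul_dvd_mul_left _ (ih R h2)

/-- given a solution of the Bethe equations, `Q(λ)` divides
`a(λ)Q(λ/q) + d(λ)Q(λq)` in `ℂ[λ, λ⁻¹]`, so the reconstructed `t` is a genuine
Laurent polynomial. -/
theorem stmt_19 (p : ℕ) (hp : Odd p) (hp1 : 1 < p) (q : ℂ) (hq : IsPrimitiveRoot q p)
    (m n : ℕ) (ℓ : Fin m → ℂ) (hℓ0 : ∀ h, ℓ h ≠ 0)
    (hdist : Function.Injective ℓ)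
    (a d : ℂ → ℂ) (ha : IsLaurentFun a) (hd : IsLaurentFun d)
    (hd0 : ∀ c, d (ℓ c) ≠ 0)
    (hsep : ∀ c h, ℓ c / q ≠ ℓ h)
    (Q : ℂ → ℂ) (hQ : ∀ x : ℂ, Q x = x ^ n * ∏ h, (ℓ h - x))
    (hBethe : ∀ c : Fin m,
      a (ℓ c) / d (ℓ c) = -q ^ (2*n) * ∏ h, (q * ℓ c - ℓ h) / (ℓ c / q - ℓ h)) :
    ∃ T : ℂ → ℂ, IsLaurentFun T ∧ ∀ x : ℂ, x ≠ 0 →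
      a x * Q (x / q) + d x * Q (x * q) = T x * Q x := by
  have hqp : q ^ p = 1 := hq.pow_eq_one
  have hq0 : q ≠ 0 := by
    intro h
    rw [h, zero_pow (by omega : p ≠ 0)] at hqp
    exact one_ne_zero hqp.symm
  obtain ⟨Ma, Pa, hPa⟩ := laurent_to_poly ha
  obtain ⟨Md, Pd, hPd⟩ := laurent_to_poly hd
  set Q1 : Polynomial ℂ := Polynomial.C ((q⁻¹)^n) * Polynomial.X^n *
    ∏ h, (Polynomial.C (ℓ h) - Polynomial.C q⁻¹ * Polynomial.X) with hQ1def
  set Q2 : Polynomial ℂ := Polynomial.C (q^n) * Polynomial.X^n *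
    ∏ h, (Polynomial.C (ℓ h) - Polynomial.C q * Polynomial.X) with hQ2def
  have hQ1 : ∀ x : ℂ, Q1.eval x = Q (x / q) := by
    intro x
    rw [hQ, hQ1def]
    simp only [Polynomial.eval_mul, Polynomial.eval_pow, Polynomial.eval_C,
      Polynomial.eval_X, Polynomial.eval_prod, Polynomial.eval_sub]
    rw [div_pow]
    have : (x / q) ^ n = q⁻¹ ^ n * x ^ n := by
      rw [div_eq_mul_inv, mul_pow]; ring
    rw [div_pow] at this
    rw [this]
    congr 1
    exact Finset.prod_congr rfl fun h _ => by rw [div_eq_mul_inv]; ring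
  have hQ2 : ∀ x : ℂ, Q2.eval x = Q (x * q) := by
    intro x
    rw [hQ, hQ2def]
    simp only [Polynomial.eval_mul, Polynomial.eval_pow, Polynomial.eval_C,
      Polynomial.eval_X, Polynomial.eval_prod, Polynomial.eval_sub]
    rw [mul_pow]
    congr 1
    · ring
    exact Finset.prod_congr rfl fun h _ => by ring
  set M := Ma + Md with hM
  set P : Polynomial ℂ := Pa * Polynomial.X^Md * Q1 + Pd * Polynomial.X^Ma * Q2 with hPdef
  have hP : ∀ x : ℂ, x ≠ 0 → (a x * Q (x / q) + d x * Q (x * q)) * x ^ M = P.eval x := by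
    intro x hx
    rw [hPdef]
    simp only [Polynomial.eval_add, Polynomial.eval_mul, Polynomial.eval_pow, Polynomial.eval_X]
    rw [← hPa x hx, ← hPd x hx, hQ1 x, hQ2 x, hM]
    ring
  have hroot : ∀ c, P.eval (ℓ c) = 0 := by
    intro c
    rw [← hP (ℓ c) (hℓ0 c)]
    have hD : (∏ h, (ℓ c / q - ℓ h)) ≠ 0 :=
      Finset.prod_ne_zero_iff.mpr fun h _ => sub_ne_zero.mpr (hsep c h)
    have hB := hBethe c
    rw [div_eq_iff (hd0 c)] at hB
    have hkey : a (ℓ c) * Q (ℓ c / q) + d (ℓ c) * Q (ℓ c * q) = 0 := by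
      rw [hQ, hQ, hB, Finset.prod_div_distrib]
      have e1 : (∏ h, (ℓ h - ℓ c / q)) = (-1:ℂ)^m * ∏ h, (ℓ c / q - ℓ h) := by
        rw [show ((-1:ℂ)^m) = ∏ _h : Fin m, (-1:ℂ) by simp, ← Finset.prod_mul_distrib]
        exact Finset.prod_congr rfl fun h _ => by ring
      have e2 : (∏ h, (ℓ h - ℓ c * q)) = (-1:ℂ)^m * ∏ h, (q * ℓ c - ℓ h) := by
        rw [show ((-1:ℂ)^m) = ∏ _h : Fin m, (-1:ℂ) by simp, ← Finset.prod_mul_distrib]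
        exact Finset.prod_congr rfl fun h _ => by ring
      have hD2 : (∏ h, (ℓ c - q * ℓ h)) ≠ 0 := by
        refine Finset.prod_ne_zero_iff.mpr fun h _ => sub_ne_zero.mpr fun he => hsep c h ?_
        rw [he]
        field_simp
      rw [e1, e2]
      field_simp [hD2]
      have hqn : q ^ (n * 2) * q⁻¹ ^ n = q ^ n := by
        rw [inv_pow, pow_mul, sq, mul_assoc, mul_inv_cancel₀ (pow_ne_zero n hq0), mul_one]
      linear_combination (-(ℓ c ^ n * ∏ x, (q * ℓ c - ℓ x)) * d (ℓ c) * (-1:ℂ)^m) * hqn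
    rw [hkey, zero_mul]
  obtain ⟨R0, hR0⟩ := prod_X_sub_C_dvd_of_injective ℓ hdist P hroot
  have hone : ((-1:Polynomial ℂ)^m) * ((-1:Polynomial ℂ)^m) = 1 := by
    rw [← pow_add]
    exact Even.neg_one_pow ⟨m, rfl⟩
  set R : Polynomial ℂ := (-1:Polynomial ℂ)^m * R0 with hRdef
  have hQmfact : (∏ h, (Polynomial.C (ℓ h) - Polynomial.X)) =
      (-1:Polynomial ℂ)^m * ∏ h, (Polynomial.X - Polynomial.C (ℓ h)) := by
    rw [show ((-1:Polynomial ℂ)^m) = ∏ _h : Fin m, (-1:Polynomial ℂ) by simp,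
      ← Finset.prod_mul_distrib]
    exact Finset.prod_congr rfl fun h _ => by ring
  have hPfact : P = (∏ h, (Polynomial.C (ℓ h) - Polynomial.X)) * R := by
    rw [hQmfact, hRdef, hR0]
    linear_combination ((∏ h, (Polynomial.X - Polynomial.C (ℓ h))) * R0) * hone.symm
  refine ⟨fun x => R.eval x / x ^ (M + n), poly_to_laurent (M + n) R, fun x hx => ?_⟩
  apply mul_right_cancel₀ (pow_ne_zero M hx)
  rw [hP x hx, hPfact, Polynomial.eval_mul]
  have hevalprod : (∏ h, (Polynomial.C (ℓ h) - Polynomial.X)).eval x = ∏ h, (ℓ h - x) := by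
    simp [Polynomial.eval_prod]
  rw [hevalprod, hQ x]
  field_simp
  ring
end
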